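/- Let K > 0 and 0 ≤ α ≤ (√57 − 7)/4, and define φ(s) = K + (1+s)^{−α} for s ≥ 0. Then φ is twice continuously differentiable on [0,∞) and for all s ≥ 0: s²·|φ''(s)| ≤ α(α+1), 3φ'(s) + 2s·|φ''(s)| ≤ 0, and φ(s) + 5s·φ'(s) − 2s²·|φ''(s)| ≥ 0. -/

import Mathlib

private lemma phi_d1 (K α : ℝ) {s : ℝ} (hs : 0 < 1 + s) :
    HasDerivAt (fun t : ℝ => K + (1 + t) ^ (-α)) (-α * (1 + s) ^ (-α - 1)) s := by
  have h1 : HasDerivAt (fun t : ℝ => 1 + t) 1 s := (hasDerivAt_id s).const_add 1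
  have h2 : HasDerivAt (fun x : ℝ => x ^ (-α)) (-α * (1 + s) ^ (-α - 1)) (1 + s) :=
    Real.hasDerivAt_rpow_const (Or.inl hs.ne')
  have := (h2.comp s h1).const_add K
  simpa using this

private lemma phi_d2 (α : ℝ) {s : ℝ} (hs : 0 < 1 + s) :
    HasDerivAt (fun t : ℝ => -α * (1 + t) ^ (-α - 1))
      (α * (α + 1) * (1 + s) ^ (-α - 2)) s := by
  have h1 : HasDerivAt (fun t : ℝ => 1 + t) 1 s := (hasDerivAt_id s).const_add 1
  have h2 : HasDerivAt (fun x : ℝ => x ^ (-α - 1)) ((-α - 1) * (1 + s) ^ (-α - 1 - 1)) (1 + s) :=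
    Real.hasDerivAt_rpow_const (Or.inl hs.ne')
  have := ((h2.comp s h1).const_mul (-α))
  have h3 : (-α - 1 - 1) = -α - 2 := by ring
  rw [h3] at this
  convert this using 1
  case e'_9 => ring
  all_goals rfl

theorem model_phi_satisfies_phi4
    (K α : ℝ) (hK : 0 < K) (hα0 : 0 ≤ α) (hα : α ≤ (Real.sqrt 57 - 7) / 4)
    (φ : ℝ → ℝ) (hφdef : ∀ s : ℝ, φ s = K + (1 + s) ^ (-α)) :
    ContDiffOn ℝ 2 φ (Set.Ici 0) ∧
      ∀ s ∈ Set.Ici (0:ℝ),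
        s ^ 2 * |deriv (deriv φ) s| ≤ α * (α + 1) ∧
        3 * deriv φ s + 2 * s * |deriv (deriv φ) s| ≤ 0 ∧
        0 ≤ φ s + 5 * s * deriv φ s - 2 * s ^ 2 * |deriv (deriv φ) s| := by
  have hφ : φ = fun t : ℝ => K + (1 + t) ^ (-α) := funext hφdef
  subst hφ
  -- numeric consequence of hα
  have h57 : Real.sqrt 57 ^ 2 = 57 := Real.sq_sqrt (by norm_num)
  have hq : 2 * α ^ 2 + 7 * α ≤ 1 := by nlinarith [Real.sqrt_nonneg 57]
  have hα7 : α ≤ 1 / 7 := by nlinarith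
  constructor
  · intro x hx
    have hx1 : (0:ℝ) < 1 + x := by
      have : (0:ℝ) ≤ x := hx
      linarith
    have h1 : ContDiffAt ℝ 2 (fun t : ℝ => 1 + t) x := (contDiff_const.add contDiff_id).contDiffAt
    have h2 : ContDiffAt ℝ 2 (fun y : ℝ => y ^ (-α)) (1 + x) :=
      Real.contDiffAt_rpow_const_of_ne hx1.ne'
    exact (contDiffAt_const.add (h2.comp x h1)).contDiffWithinAt
  · intro s hs
    have hs0 : (0:ℝ) ≤ s := hs
    have hu0 : (0:ℝ) < 1 + s := by linarith
    set u : ℝ := 1 + s with hu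
    have hu1 : (1:ℝ) ≤ u := by simp [hu]; linarith
    -- first derivative
    have hd1 : ∀ t : ℝ, 0 < 1 + t →
        deriv (fun t : ℝ => K + (1 + t) ^ (-α)) t = -α * (1 + t) ^ (-α - 1) :=
      fun t ht => (phi_d1 K α ht).deriv
    have hder1 : deriv (fun t : ℝ => K + (1 + t) ^ (-α)) s = -α * u ^ (-α - 1) := hd1 s hu0
    -- second derivative via eventual equality
    have hev : deriv (fun t : ℝ => K + (1 + t) ^ (-α)) =ᶠ[nhds s]
        fun t : ℝ => -α * (1 + t) ^ (-α - 1) := by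
      filter_upwards [eventually_gt_nhds (show (-1:ℝ) < s by linarith)] with t ht
      exact hd1 t (by linarith)
    have hder2 : deriv (deriv (fun t : ℝ => K + (1 + t) ^ (-α))) s
        = α * (α + 1) * u ^ (-α - 2) := by
      rw [hev.deriv_eq]
      exact (phi_d2 α hu0).deriv
    have hv : (0:ℝ) < u ^ (-α - 2) := Real.rpow_pos_of_pos hu0 _
    have habs : |α * (α + 1) * u ^ (-α - 2)| = α * (α + 1) * u ^ (-α - 2) :=
      abs_of_nonneg (by positivity)
    rw [hder1, hder2, habs]
    -- rpow identities
    have hB : u ^ (-α - 1) = u * u ^ (-α - 2) := by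
      rw [show (-α - 1) = 1 + (-α - 2) by ring, Real.rpow_add hu0, Real.rpow_one]
    have hA : u ^ (-α) = u ^ 2 * u ^ (-α - 2) := by
      rw [← Real.rpow_natCast u 2, ← Real.rpow_add hu0]
      norm_num
    have hsu : s ≤ u := by simp [hu]
    refine ⟨?_, ?_, ?_⟩
    · -- s² |φ''| ≤ α(α+1)
      have h3 : u ^ (-α) ≤ 1 := Real.rpow_le_one_of_one_le_of_nonpos hu1 (by linarith)
      have key : s ^ 2 * u ^ (-α - 2) ≤ 1 := by
        have h1 : s ^ 2 * u ^ (-α - 2) ≤ u ^ 2 * u ^ (-α - 2) := by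
          apply mul_le_mul_of_nonneg_right _ hv.le
          exact pow_le_pow_left₀ hs0 hsu 2
        rw [← hA] at h1
        linarith
      have := mul_le_mul_of_nonneg_left key (mul_nonneg hα0 (by linarith : (0:ℝ) ≤ α + 1))
      nlinarith [this]
    · -- 3φ' + 2s|φ''| ≤ 0
      rw [hB]
      nlinarith [mul_nonneg (by linarith : (0:ℝ) ≤ 1 - 2 * α)
        (mul_nonneg (mul_nonneg hs0 hα0) hv.le), mul_nonneg hα0 hv.le]
    · -- φ + 5sφ' - 2s²|φ''| ≥ 0
      have hQ : 0 ≤ u ^ 2 - 5 * α * s * u - 2 * α * (α + 1) * s ^ 2 := by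
        nlinarith [mul_nonneg (mul_nonneg hα0 (by linarith : (0:ℝ) ≤ u - s)) hu0.le,
          mul_nonneg (mul_nonneg (mul_nonneg hα0 hα0) (by linarith : (0:ℝ) ≤ u - s))
            (by linarith : (0:ℝ) ≤ u + s),
          mul_nonneg (by linarith : (0:ℝ) ≤ 1 - 7 * α - 2 * α ^ 2) (sq_nonneg u)]
      rw [hφdef s, ← hu, hA, hB]
      nlinarith [mul_nonneg hv.le hQ, hK.le]
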